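/- Concavity of the CVaR Bellman minimax map (key step in the proof of Theorem 3): let S and A be finite nonempty sets, p a probability vector on S, and for each (s',a') ∈ S × A let g_{s',a'} : [0,1] → ℝ be a bounded concave function. Then the function F : (0,1] → ℝ defined by F(y) := min_{a' ∈ A} sup_{ξ ∈ U(y,p)} Σ_{s' ∈ S} p(s') · g_{s',a'}(y·ξ(s')) is concave on (0,1] (note y·ξ(s') ∈ [0,1] for ξ ∈ U(y,p), so F is well defined). -/

import Mathlib

noncomputable section

/-- The CVaR risk envelope `U(y, p)`. -/
def riskEnv {Ω : Type*} [Fintype Ω] (y : ℝ) (p : Ω → ℝ) : Set (Ω → ℝ) :=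
  {ξ | (∀ ω, 0 ≤ ξ ω ∧ ξ ω ≤ 1 / y) ∧ ∑ ω, ξ ω * p ω = 1}

private lemma mul_csSup_le' {X : Set ℝ} (hX : X.Nonempty) {c d : ℝ} (hc : 0 < c)
    (h : ∀ u ∈ X, c * u ≤ d) : c * sSup X ≤ d := by
  rw [mul_comm, ← le_div_iff₀ hc]
  exact csSup_le hX (fun u hu => (le_div_iff₀ hc).mpr (by rw [mul_comm]; exact h u hu))

/-- Concavity of the CVaR Bellman minimax map (key step in the proof of Theorem 3). -/
theorem cvar_minimax_concave {S A : Type*} [Fintype S] [Fintype A] [Nonempty S] [Nonempty A]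
    (p : S → ℝ) (hp : (∀ s', 0 ≤ p s') ∧ ∑ s', p s' = 1)
    (g : S → A → ℝ → ℝ)
    (hb : ∃ B : ℝ, ∀ s' a', ∀ t ∈ Set.Icc (0:ℝ) 1, |g s' a' t| ≤ B)
    (hconc : ∀ s' a', ConcaveOn ℝ (Set.Icc (0:ℝ) 1) (g s' a')) :
    ConcaveOn ℝ (Set.Ioc (0:ℝ) 1) (fun y =>
      Finset.univ.inf' Finset.univ_nonempty (fun a' : A =>
        sSup ((fun ξ : S → ℝ => ∑ s', p s' * g s' a' (y * ξ s')) '' riskEnv y p))) := by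
  obtain ⟨B, hB⟩ := hb
  obtain ⟨hp0, hp1⟩ := hp
  set f : ℝ → A → (S → ℝ) → ℝ := fun y a' ξ => ∑ s', p s' * g s' a' (y * ξ s') with hf
  -- y * ξ s ∈ [0,1]
  have hmem : ∀ y ∈ Set.Ioc (0:ℝ) 1, ∀ ξ ∈ riskEnv y p, ∀ s, y * ξ s ∈ Set.Icc (0:ℝ) 1 := by
    rintro y ⟨hy0, hy1⟩ ξ ⟨hξ, _⟩ s
    refine ⟨mul_nonneg hy0.le (hξ s).1, ?_⟩
    calc y * ξ s ≤ y * (1 / y) := mul_le_mul_of_nonneg_left (hξ s).2 hy0.le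
      _ = 1 := by field_simp
  -- nonemptiness of riskEnv
  have hne0 : ∀ y ∈ Set.Ioc (0:ℝ) 1, (riskEnv y p).Nonempty := by
    rintro y ⟨hy0, hy1⟩
    refine ⟨fun _ => 1, ⟨fun ω => ⟨zero_le_one, ?_⟩, by simpa using hp1⟩⟩
    rw [le_div_iff₀ hy0, one_mul]; exact hy1
  have hne : ∀ y ∈ Set.Ioc (0:ℝ) 1, ∀ a', (f y a' '' riskEnv y p).Nonempty :=
    fun y hy a' => (hne0 y hy).image _
  -- boundedness above
  have hbdd : ∀ y ∈ Set.Ioc (0:ℝ) 1, ∀ a', BddAbove (f y a' '' riskEnv y p) := by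
    intro y hy a'
    refine ⟨B, ?_⟩
    rintro _ ⟨ξ, hξ, rfl⟩
    calc f y a' ξ ≤ ∑ s', p s' * B := by
          apply Finset.sum_le_sum; intro s _
          exact mul_le_mul_of_nonneg_left
            (le_of_abs_le (hB s a' _ (hmem y hy ξ hξ s))) (hp0 s)
      _ = B := by rw [← Finset.sum_mul, hp1, one_mul]
  -- key superadditivity of the sup across confidence levels
  have key : ∀ x ∈ Set.Ioc (0:ℝ) 1, ∀ y ∈ Set.Ioc (0:ℝ) 1, ∀ a b : ℝ,
      0 < a → 0 < b → a + b = 1 → ∀ a',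
      a * sSup (f x a' '' riskEnv x p) + b * sSup (f y a' '' riskEnv y p)
        ≤ sSup (f (a * x + b * y) a' '' riskEnv (a * x + b * y) p) := by
    intro x hx y hy a b ha hb' hab a'
    set z := a * x + b * y with hzdef
    have hz : z ∈ Set.Ioc (0:ℝ) 1 := by
      have := (convex_Ioc (0:ℝ) 1) hx hy ha.le hb'.le hab
      simpa [smul_eq_mul] using this
    have hz0 : (0:ℝ) < z := hz.1
    -- core: for any two selections, the combination is dominated by the sup at z
    have core : ∀ u ∈ f x a' '' riskEnv x p, ∀ v ∈ f y a' '' riskEnv y p,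
        a * u + b * v ≤ sSup (f z a' '' riskEnv z p) := by
      rintro _ ⟨ξ1, hξ1, rfl⟩ _ ⟨ξ2, hξ2, rfl⟩
      set ξ : S → ℝ := fun s => (a * (x * ξ1 s) + b * (y * ξ2 s)) / z with hξdef
      have hm1 : ∀ s, x * ξ1 s ∈ Set.Icc (0:ℝ) 1 := hmem x hx ξ1 hξ1
      have hm2 : ∀ s, y * ξ2 s ∈ Set.Icc (0:ℝ) 1 := hmem y hy ξ2 hξ2
      have hξmem : ξ ∈ riskEnv z p := by
        constructor
        · intro s
          constructor
          · apply div_nonneg _ hz0.le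
            have := (hm1 s).1; have := (hm2 s).1
            nlinarith
          · have hN : a * (x * ξ1 s) + b * (y * ξ2 s) ≤ 1 := by
              have := (hm1 s).2; have := (hm2 s).2; nlinarith
            rw [div_le_div_iff₀ hz0 hz0, one_mul]
            nlinarith [hz0]
        · have hsum : ∑ s, ξ s * p s
              = (a * x * ∑ s, ξ1 s * p s + b * y * ∑ s, ξ2 s * p s) / z := by
            rw [Finset.mul_sum, Finset.mul_sum, ← Finset.sum_add_distrib,
              Finset.sum_div]
            refine Finset.sum_congr rfl (fun s _ => ?_)
            show (a * (x * ξ1 s) + b * (y * ξ2 s)) / z * p s = _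
            field_simp
          rw [hsum, hξ1.2, hξ2.2]
          field_simp
          exact hzdef.symm
      have hzx : ∀ s, z * ξ s = a * (x * ξ1 s) + b * (y * ξ2 s) := by
        intro s; rw [hξdef]; field_simp
      have hval : a * f x a' ξ1 + b * f y a' ξ2 ≤ f z a' ξ := by
        rw [hf]
        simp only
        rw [Finset.mul_sum, Finset.mul_sum, ← Finset.sum_add_distrib]
        apply Finset.sum_le_sum
        intro s _
        rw [hzx s]
        have hc := (hconc s a').2 (hm1 s) (hm2 s) ha.le hb'.le hab
        simp only [smul_eq_mul] at hc
        nlinarith [hp0 s]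
      exact hval.trans (le_csSup (hbdd z hz a') ⟨ξ, hξmem, rfl⟩)
    have h1 : ∀ u ∈ f x a' '' riskEnv x p,
        b * sSup (f y a' '' riskEnv y p) ≤ sSup (f z a' '' riskEnv z p) - a * u := by
      intro u hu
      exact mul_csSup_le' (hne y hy a') hb' (fun v hv => by linarith [core u hu v hv])
    have h2 : a * sSup (f x a' '' riskEnv x p)
        ≤ sSup (f z a' '' riskEnv z p) - b * sSup (f y a' '' riskEnv y p) :=
      mul_csSup_le' (hne x hx a') ha (fun u hu => by linarith [h1 u hu])
    linarith
  refine ⟨convex_Ioc 0 1, ?_⟩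
  intro x hx y hy a b ha hb' hab
  simp only [smul_eq_mul]
  rcases eq_or_lt_of_le ha with h0 | ha'
  · have hb1 : b = 1 := by linarith
    simp [← h0, hb1]
  rcases eq_or_lt_of_le hb' with h0 | hb''
  · have ha1 : a = 1 := by linarith
    simp [← h0, ha1]
  apply Finset.le_inf'
  intro c _
  have hkey := key x hx y hy a b ha' hb'' hab c
  simp only [hf] at hkey
  have hx1 : Finset.univ.inf' Finset.univ_nonempty (fun a' : A =>
      sSup (f x a' '' riskEnv x p)) ≤ sSup (f x c '' riskEnv x p) :=
    Finset.inf'_le _ (Finset.mem_univ c)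
  simp only [hf] at hx1
  have hy1 : Finset.univ.inf' Finset.univ_nonempty (fun a' : A =>
      sSup (f y a' '' riskEnv y p)) ≤ sSup (f y c '' riskEnv y p) :=
    Finset.inf'_le _ (Finset.mem_univ c)
  simp only [hf] at hy1
  have := mul_le_mul_of_nonneg_left hx1 ha'.le
  have := mul_le_mul_of_nonneg_left hy1 hb''.le
  linarith
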